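/- The contraction map Φ : SL(2,ℂ) → M₂(ℂ), Φ(B) = U√(B*B - λI) (λ the smallest eigenvalue of B*B, U the unitary polar factor), is invariant-preserving: μ_R(Φ(B)) = i·Φ(B)*Φ(B) = i(B*B - λI) and the stabilizer of B under left and right SU(2)-multiplication is unchanged unless B*B = I. In particular Φ restricted to SU(2) ⊂ SL(2,ℂ) is constant equal to 0. -/

import Mathlib

open Matrix ComplexOrder

/-- The positive semidefinite square root of a positive semidefinite matrix
(the definition `Matrix.PosSemidef.sqrt` of the older Mathlib, since removed). -/
noncomputable def Matrix.PosSemidef.sqrt {n 𝕜 : Type*} [Fintype n] [DecidableEq n] [RCLike 𝕜]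
    {A : Matrix n n 𝕜} (hA : A.PosSemidef) : Matrix n n 𝕜 :=
  hA.1.eigenvectorUnitary.1 * diagonal ((↑) ∘ (√·) ∘ hA.1.eigenvalues) *
  (star hA.1.eigenvectorUnitary : Matrix n n 𝕜)

open scoped MatrixOrder in
lemma Matrix.PosSemidef.sqrt_eq_cfcSqrt {A : Matrix (Fin 2) (Fin 2) ℂ} (hA : A.PosSemidef) :
    hA.sqrt = CFC.sqrt A := by
  rw [CFC.sqrt_eq_cfc, cfc_nnreal_eq_real _ A hA.nonneg, hA.1.cfc_eq]
  simp only [Matrix.IsHermitian.cfc, Matrix.PosSemidef.sqrt]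
  congr 2
  ext i j
  simp only [diagonal_apply, Function.comp_apply, Real.coe_sqrt, Real.coe_toNNReal',
    max_eq_left (hA.eigenvalues_nonneg i)]

open scoped MatrixOrder in
lemma Matrix.PosSemidef.posSemidef_sqrt {A : Matrix (Fin 2) (Fin 2) ℂ} (hA : A.PosSemidef) :
    hA.sqrt.PosSemidef := by
  rw [hA.sqrt_eq_cfcSqrt]; exact (CFC.sqrt_nonneg A).posSemidef

open scoped MatrixOrder in
lemma Matrix.PosSemidef.sqrt_mul_self {A : Matrix (Fin 2) (Fin 2) ℂ} (hA : A.PosSemidef) :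
    hA.sqrt * hA.sqrt = A := by
  rw [hA.sqrt_eq_cfcSqrt]; exact CFC.sqrt_mul_sqrt_self A hA.nonneg

open scoped MatrixOrder in
lemma Matrix.PosSemidef.eq_sqrt_of_sq_eq {A B : Matrix (Fin 2) (Fin 2) ℂ} (hB : B.PosSemidef)
    (hA : A.PosSemidef) (hBA : B ^ 2 = A) : B = hA.sqrt := by
  rw [hA.sqrt_eq_cfcSqrt, eq_comm, CFC.sqrt_eq_iff A B hA.nonneg hB.nonneg, ← hBA, pow_two]

lemma psd2_diag_nonneg (P : Matrix (Fin 2) (Fin 2) ℂ) (hP : P.PosSemidef) (i : Fin 2) :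
    0 ≤ P i i := by
  have := hP.dotProduct_mulVec_nonneg (Pi.single i 1)
  simpa [dotProduct, Matrix.mulVec, Fin.sum_univ_two, Pi.single_apply] using this

lemma psd2_trace_zero (P : Matrix (Fin 2) (Fin 2) ℂ) (hP : P.PosSemidef)
    (h0 : P.trace = 0) : P = 0 := by
  have h00 := psd2_diag_nonneg P hP 0
  have h11 := psd2_diag_nonneg P hP 1
  rw [Matrix.trace_fin_two] at h0
  have hP00 : P 0 0 = 0 := by
    rw [Complex.nonneg_iff] at h00 h11
    have : (P 0 0).re + (P 1 1).re = 0 := by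
      have := congrArg Complex.re h0; simpa using this
    apply Complex.ext <;> simp [h00.2] <;> linarith [h00.1, h11.1]
  have hP11 : P 1 1 = 0 := by rw [hP00, zero_add] at h0; exact h0
  have herm := hP.1
  have h10 : P 1 0 = star (P 0 1) := by
    have := congrFun (congrFun herm 1) 0
    simpa [Matrix.conjTranspose_apply] using this.symm
  have key := hP.dotProduct_mulVec_nonneg ![-(P 0 1), 1]
  have hkey : (0:ℂ) ≤ -(2 * ((Complex.normSq (P 0 1) : ℝ) : ℂ)) := by
    have e : dotProduct (star ![-(P 0 1), 1]) ((P *ᵥ ![-(P 0 1), 1]))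
        = -(2 * ((Complex.normSq (P 0 1) : ℝ) : ℂ)) := by
      rw [Complex.normSq_eq_conj_mul_self]
      simp [dotProduct, Matrix.mulVec, Fin.sum_univ_two, hP00, hP11, h10]
      ring
    rwa [e] at key
  have h01 : P 0 1 = 0 := by
    rw [Complex.nonneg_iff] at hkey
    have hre := hkey.1
    simp only [Complex.neg_re, Complex.mul_re, Complex.ofReal_re, Complex.ofReal_im, Complex.re_ofNat, Complex.im_ofNat] at hre
    have : Complex.normSq (P 0 1) = 0 := by
      nlinarith [Complex.normSq_nonneg (P 0 1), hre]
    exact Complex.normSq_eq_zero.mp this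
  ext i j
  fin_cases i <;> fin_cases j <;>
    simp [hP00, hP11, h01, h10]

lemma unitary_trace_det_eq_one (V : Matrix (Fin 2) (Fin 2) ℂ)
    (hV1 : V * Vᴴ = 1) (hV2 : Vᴴ * V = 1) (ht : V.trace = 2) : V = 1 := by
  have r0 : V 0 0 * star (V 0 0) + V 0 1 * star (V 0 1) = 1 := by
    have := congrFun (congrFun hV1 0) 0
    simpa [Matrix.mul_apply, Fin.sum_univ_two, Matrix.conjTranspose_apply, Matrix.one_apply] using this
  have r1 : V 1 0 * star (V 1 0) + V 1 1 * star (V 1 1) = 1 := by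
    have := congrFun (congrFun hV1 1) 1
    simpa [Matrix.mul_apply, Fin.sum_univ_two, Matrix.conjTranspose_apply, Matrix.one_apply] using this
  rw [Matrix.trace_fin_two] at ht
  -- real versions
  have n0 : Complex.normSq (V 0 0) + Complex.normSq (V 0 1) = 1 := by
    have := congrArg Complex.re r0
    simpa [Complex.mul_conj] using this
  have n1 : Complex.normSq (V 1 0) + Complex.normSq (V 1 1) = 1 := by
    have := congrArg Complex.re r1
    simpa [Complex.mul_conj] using this
  have tre : (V 0 0).re + (V 1 1).re = 2 := by
    have := congrArg Complex.re ht; simpa using this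
  have tim : (V 0 0).im + (V 1 1).im = 0 := by
    have := congrArg Complex.im ht; simpa using this
  have hsq0 : Complex.normSq (V 0 0) ≤ 1 := by nlinarith [Complex.normSq_nonneg (V 0 1)]
  have hsq1 : Complex.normSq (V 1 1) ≤ 1 := by nlinarith [Complex.normSq_nonneg (V 1 0)]
  rw [Complex.normSq_apply] at hsq0 hsq1
  have hx0 : (V 0 0).re = 1 := by nlinarith [sq_nonneg ((V 0 0).re - 1), sq_nonneg ((V 0 0).im)]
  have hy0 : (V 0 0).im = 0 := by nlinarith [sq_nonneg ((V 0 0).im)]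
  have h00 : V 0 0 = 1 := Complex.ext (by simp [hx0]) (by simp [hy0])
  have h11 : V 1 1 = 1 := by
    apply Complex.ext <;> simp <;> [skip; skip] <;> skip
    · linarith
    · linarith
  have h01 : V 0 1 = 0 := by
    have : Complex.normSq (V 0 1) = 0 := by
      rw [h00] at n0; simpa using n0
    exact Complex.normSq_eq_zero.mp this
  have h10 : V 1 0 = 0 := by
    have : Complex.normSq (V 1 0) = 0 := by
      rw [h11] at n1; simpa using n1
    exact Complex.normSq_eq_zero.mp this
  ext i j
  fin_cases i <;> fin_cases j <;> simp [h00, h01, h10, h11, Matrix.one_apply]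

lemma unitary_fix (V P : Matrix (Fin 2) (Fin 2) ℂ)
    (hV1 : V * Vᴴ = 1) (hV2 : Vᴴ * V = 1) (hdet : V.det = 1)
    (hP : P.PosSemidef) (hP0 : P ≠ 0) (hfix : V * P = P) : V = 1 := by
  have hadj : Vᴴ = V.adjugate := by
    have h1 : V.adjugate * V = 1 := by rw [Matrix.adjugate_mul, hdet, one_smul]
    calc Vᴴ = (V.adjugate * V) * Vᴴ := by rw [h1, one_mul]
      _ = V.adjugate * (V * Vᴴ) := by rw [Matrix.mul_assoc]
      _ = V.adjugate := by rw [hV1, mul_one]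
  have hadj2 : V.adjugate = V.trace • (1 : Matrix (Fin 2) (Fin 2) ℂ) - V := by
    rw [Matrix.adjugate_fin_two, Matrix.trace_fin_two]
    ext i j
    fin_cases i <;> fin_cases j <;>
      simp [Matrix.one_apply, Matrix.smul_apply] <;> ring
  have hPV : P * Vᴴ = P := by
    have := congrArg Matrix.conjTranspose hfix
    simpa [Matrix.conjTranspose_mul, hP.1.eq] using this
  rw [hadj, hadj2, Matrix.mul_sub, Matrix.mul_smul, Matrix.mul_one] at hPV
  have htr := congrArg Matrix.trace hPV
  rw [Matrix.trace_sub, Matrix.trace_smul, Matrix.trace_mul_comm, hfix] at htr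
  -- htr : V.trace • P.trace - P.trace = P.trace
  have hPtr : P.trace ≠ 0 := fun h => hP0 (psd2_trace_zero P hP h)
  have ht : V.trace = 2 := by
    have : (V.trace - 2) * P.trace = 0 := by
      simp only [smul_eq_mul] at htr; ring_nf; ring_nf at htr; linear_combination htr
    rcases mul_eq_zero.mp this with h | h
    · linear_combination h
    · exact absurd h hPtr
  exact unitary_trace_det_eq_one V hV1 hV2 ht

lemma sqrt_conj {A : Matrix (Fin 2) (Fin 2) ℂ} (hA : A.PosSemidef)
    (u : Matrix (Fin 2) (Fin 2) ℂ) (hu : uᴴ * u = 1)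
    (hcomm : u * A * uᴴ = A) : u * hA.sqrt * uᴴ = hA.sqrt := by
  have hps : (u * hA.sqrt * uᴴ).PosSemidef :=
    hA.posSemidef_sqrt.mul_mul_conjTranspose_same u
  refine hps.eq_sqrt_of_sq_eq hA ?_
  have : (u * hA.sqrt * uᴴ) * (u * hA.sqrt * uᴴ) = u * A * uᴴ := by
    calc (u * hA.sqrt * uᴴ) * (u * hA.sqrt * uᴴ)
        = u * hA.sqrt * (uᴴ * u) * hA.sqrt * uᴴ := by
          simp only [Matrix.mul_assoc]
      _ = u * (hA.sqrt * hA.sqrt) * uᴴ := by rw [hu]; simp only [Matrix.mul_one, Matrix.mul_assoc]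
      _ = u * A * uᴴ := by rw [hA.sqrt_mul_self]
  rw [pow_two, this, hcomm]

lemma sandwich_assoc (g u h X : Matrix (Fin 2) (Fin 2) ℂ) (hh2 : hᴴ * h = 1) :
    (g * u * hᴴ) * (h * X * hᴴ) = g * (u * X) * hᴴ := by
  simp only [Matrix.mul_assoc]
  rw [← Matrix.mul_assoc hᴴ h (X * hᴴ), hh2, Matrix.one_mul]

lemma sandwich_conj (g h X : Matrix (Fin 2) (Fin 2) ℂ) (hg2 : gᴴ * g = 1) :
    (g * X * hᴴ)ᴴ * (g * X * hᴴ) = h * (Xᴴ * X) * hᴴ := by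
  calc (g * X * hᴴ)ᴴ * (g * X * hᴴ)
      = h * Xᴴ * (gᴴ * g) * (X * hᴴ) := by
        simp only [Matrix.conjTranspose_mul, Matrix.conjTranspose_conjTranspose,
          Matrix.mul_assoc]
    _ = h * (Xᴴ * X) * hᴴ := by rw [hg2]; simp only [Matrix.mul_one, Matrix.mul_assoc]

theorem stmt10 (B : Matrix (Fin 2) (Fin 2) ℂ) (hB : B.det = 1) (lam : ℝ)
    (hmin : ∀ i, lam ≤ (Matrix.posSemidef_conjTranspose_mul_self B).1.eigenvalues i)
    (hex : ∃ i, (Matrix.posSemidef_conjTranspose_mul_self B).1.eigenvalues i = lam)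
    (hpsd : (Bᴴ * B - (lam : ℂ) • (1 : Matrix (Fin 2) (Fin 2) ℂ)).PosSemidef)
    (U : Matrix (Fin 2) (Fin 2) ℂ) (hU : U ∈ Matrix.unitaryGroup (Fin 2) ℂ)
    (hpolar : B = U * (Matrix.posSemidef_conjTranspose_mul_self B).sqrt) :
    (Complex.I • ((U * hpsd.sqrt)ᴴ * (U * hpsd.sqrt))
        = Complex.I • (Bᴴ * B - (lam : ℂ) • (1 : Matrix (Fin 2) (Fin 2) ℂ))) ∧
    (∀ g h : Matrix (Fin 2) (Fin 2) ℂ,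
      g ∈ Matrix.unitaryGroup (Fin 2) ℂ → h ∈ Matrix.unitaryGroup (Fin 2) ℂ →
      g.det = 1 → h.det = 1 → Bᴴ * B ≠ 1 →
      (g * B * hᴴ = B ↔ g * (U * hpsd.sqrt) * hᴴ = U * hpsd.sqrt)) ∧
    (B ∈ Matrix.unitaryGroup (Fin 2) ℂ → U * hpsd.sqrt = 0) := by
  have hS := Matrix.posSemidef_conjTranspose_mul_self B
  have hU2 : Uᴴ * U = 1 := by
    have := Matrix.mem_unitaryGroup_iff'.mp hU
    rwa [Matrix.star_eq_conjTranspose] at this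
  have hU1 : U * Uᴴ = 1 := by
    have := Matrix.mem_unitaryGroup_iff.mp hU
    rwa [Matrix.star_eq_conjTranspose] at this
  have hPP : hpsd.sqrt * hpsd.sqrt = Bᴴ * B - (lam : ℂ) • 1 := hpsd.sqrt_mul_self
  have hQQ : hS.sqrt * hS.sqrt = Bᴴ * B := hS.sqrt_mul_self
  have hUPUP : (U * hpsd.sqrt)ᴴ * (U * hpsd.sqrt) = Bᴴ * B - (lam : ℂ) • 1 := by
    calc (U * hpsd.sqrt)ᴴ * (U * hpsd.sqrt)
        = hpsd.sqrtᴴ * (Uᴴ * U) * hpsd.sqrt := by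
          simp only [Matrix.conjTranspose_mul, Matrix.mul_assoc]
      _ = hpsd.sqrt * hpsd.sqrt := by
          rw [hU2, Matrix.mul_one, hpsd.posSemidef_sqrt.1.eq]
      _ = _ := hPP
  have hdetS : (Bᴴ * B).det = 1 := by
    rw [Matrix.det_mul, Matrix.det_conjTranspose, hB]; simp
  refine ⟨by rw [hUPUP], ?_, ?_⟩
  · -- stabilizer statement
    intro g h hg hh hgdet hhdet hne
    have hg2 : gᴴ * g = 1 := by
      have := Matrix.mem_unitaryGroup_iff'.mp hg
      rwa [Matrix.star_eq_conjTranspose] at this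
    have hg1 : g * gᴴ = 1 := by
      have := Matrix.mem_unitaryGroup_iff.mp hg
      rwa [Matrix.star_eq_conjTranspose] at this
    have hh2 : hᴴ * h = 1 := by
      have := Matrix.mem_unitaryGroup_iff'.mp hh
      rwa [Matrix.star_eq_conjTranspose] at this
    have hh1 : h * hᴴ = 1 := by
      have := Matrix.mem_unitaryGroup_iff.mp hh
      rwa [Matrix.star_eq_conjTranspose] at this
    -- common: conjugation by h preserving S transfers to M, sqrt, etc.
    have transferM : h * (Bᴴ * B) * hᴴ = Bᴴ * B →
        h * (Bᴴ * B - (lam : ℂ) • 1) * hᴴ = Bᴴ * B - (lam : ℂ) • 1 := by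
      intro hSh
      have : h * (Bᴴ * B - (lam : ℂ) • 1) * hᴴ
          = h * (Bᴴ * B) * hᴴ - (lam : ℂ) • (h * hᴴ) := by
        rw [Matrix.mul_sub, Matrix.sub_mul, Matrix.mul_smul, Matrix.mul_one, Matrix.smul_mul]
      rw [this, hSh, hh1]
    have transferS : h * (Bᴴ * B - (lam : ℂ) • 1) * hᴴ = Bᴴ * B - (lam : ℂ) • 1 →
        h * (Bᴴ * B) * hᴴ = Bᴴ * B := by
      intro hMh
      have e : Bᴴ * B = (Bᴴ * B - (lam : ℂ) • 1) + (lam : ℂ) • 1 := by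
        rw [sub_add_cancel]
      rw [e, Matrix.mul_add, Matrix.add_mul, hMh, Matrix.mul_smul, Matrix.mul_one,
        Matrix.smul_mul, hh1]
    have hQdet : IsUnit hS.sqrt.det := by
      apply IsUnit.of_mul_eq_one hS.sqrt.det
      rw [← Matrix.det_mul, hQQ, hdetS]
    constructor
    · intro hgBh
      have hSh : h * (Bᴴ * B) * hᴴ = Bᴴ * B := by
        have e1 := sandwich_conj g h B hg2
        rw [hgBh] at e1
        exact e1.symm
      have hMh := transferM hSh
      have hPh := sqrt_conj hpsd h hh2 hMh
      have hQh := sqrt_conj hS h hh2 hSh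
      have e : (g * U * hᴴ) * hS.sqrt = U * hS.sqrt := by
        calc (g * U * hᴴ) * hS.sqrt
            = (g * U * hᴴ) * (h * hS.sqrt * hᴴ) := by rw [hQh]
          _ = g * (U * hS.sqrt) * hᴴ := sandwich_assoc g U h hS.sqrt hh2
          _ = U * hS.sqrt := by rw [← hpolar, hgBh, hpolar]
      have hUg : g * U * hᴴ = U := by
        have hQinv : hS.sqrt * hS.sqrt⁻¹ = 1 := Matrix.mul_nonsing_inv _ hQdet
        have := congrArg (fun X => X * hS.sqrt⁻¹) e
        simpa only [Matrix.mul_assoc, hQinv, Matrix.mul_one] using this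
      calc g * (U * hpsd.sqrt) * hᴴ
          = (g * U * hᴴ) * (h * hpsd.sqrt * hᴴ) := (sandwich_assoc g U h hpsd.sqrt hh2).symm
        _ = U * hpsd.sqrt := by rw [hUg, hPh]
    · intro hgP
      have hMh : h * (Bᴴ * B - (lam : ℂ) • 1) * hᴴ = Bᴴ * B - (lam : ℂ) • 1 := by
        have e1 := sandwich_conj g h (U * hpsd.sqrt) hg2
        rw [hgP, hUPUP] at e1
        exact e1.symm
      have hSh := transferS hMh
      have hPh := sqrt_conj hpsd h hh2 hMh
      have hQh := sqrt_conj hS h hh2 hSh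
      have hP0 : hpsd.sqrt ≠ 0 := by
        intro h0
        have hM0 : Bᴴ * B - (lam : ℂ) • 1 = 0 := by
          rw [← hPP, h0, Matrix.mul_zero]
        have hSeq : Bᴴ * B = (lam : ℂ) • 1 := sub_eq_zero.mp hM0
        have hdet2 : ((lam : ℂ) • (1 : Matrix (Fin 2) (Fin 2) ℂ)).det = 1 := by
          rw [← hSeq]; exact hdetS
        rw [Matrix.det_smul, Matrix.det_one, mul_one] at hdet2
        have hlam2 : lam ^ 2 = 1 := by
          have : ((lam ^ 2 : ℝ) : ℂ) = ((1 : ℝ) : ℂ) := by push_cast; simpa using hdet2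
          exact_mod_cast this
        obtain ⟨i, hi⟩ := hex
        have hlam0 : 0 ≤ lam := hi ▸ hS.eigenvalues_nonneg i
        have hlam1 : lam = 1 := by nlinarith
        apply hne
        rw [hSeq, hlam1]; simp
      set W := g * U * hᴴ with hW
      have hWP : W * hpsd.sqrt = U * hpsd.sqrt := by
        calc W * hpsd.sqrt = W * (h * hpsd.sqrt * hᴴ) := by rw [hPh]
          _ = g * (U * hpsd.sqrt) * hᴴ := sandwich_assoc g U h hpsd.sqrt hh2
          _ = U * hpsd.sqrt := hgP
      have hW2 : Wᴴ * W = 1 := by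
        calc Wᴴ * W = h * Uᴴ * (gᴴ * g) * (U * hᴴ) := by
              simp only [hW, Matrix.conjTranspose_mul, Matrix.conjTranspose_conjTranspose,
                Matrix.mul_assoc]
          _ = h * (Uᴴ * U) * hᴴ := by rw [hg2]; simp only [Matrix.mul_one, Matrix.mul_assoc]
          _ = 1 := by rw [hU2, Matrix.mul_one, hh1]
      have hW1 : W * Wᴴ = 1 := by
        calc W * Wᴴ = g * U * (hᴴ * h) * (Uᴴ * gᴴ) := by
              simp only [hW, Matrix.conjTranspose_mul, Matrix.conjTranspose_conjTranspose,
                Matrix.mul_assoc]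
          _ = g * (U * Uᴴ) * gᴴ := by rw [hh2]; simp only [Matrix.mul_one, Matrix.mul_assoc]
          _ = 1 := by rw [hU1, Matrix.mul_one, hg1]
      set V := Uᴴ * W with hV
      have hVu2 : Vᴴ * V = 1 := by
        calc Vᴴ * V = Wᴴ * (U * (Uᴴ * W)) := by
              simp only [hV, Matrix.conjTranspose_mul, Matrix.conjTranspose_conjTranspose,
                Matrix.mul_assoc]
          _ = Wᴴ * W := by rw [← Matrix.mul_assoc U Uᴴ W, hU1, Matrix.one_mul]
          _ = 1 := hW2
      have hVu1 : V * Vᴴ = 1 := by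
        calc V * Vᴴ = Uᴴ * (W * (Wᴴ * U)) := by
              simp only [hV, Matrix.conjTranspose_mul, Matrix.conjTranspose_conjTranspose,
                Matrix.mul_assoc]
          _ = Uᴴ * U := by rw [← Matrix.mul_assoc W Wᴴ U, hW1, Matrix.one_mul]
          _ = 1 := hU2
      have hVdet : V.det = 1 := by
        have hUU : Uᴴ.det * U.det = 1 := by rw [← Matrix.det_mul, hU2, Matrix.det_one]
        have hhdet' : (hᴴ).det = 1 := by
          rw [Matrix.det_conjTranspose, hhdet, star_one]
        simp only [hV, hW, Matrix.det_mul, hgdet, hhdet', one_mul, mul_one]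
        linear_combination hUU
      have hVP : V * hpsd.sqrt = hpsd.sqrt := by
        calc V * hpsd.sqrt = Uᴴ * (W * hpsd.sqrt) := by rw [Matrix.mul_assoc]
          _ = Uᴴ * (U * hpsd.sqrt) := by rw [hWP]
          _ = hpsd.sqrt := by rw [← Matrix.mul_assoc, hU2, Matrix.one_mul]
      have hVone : V = 1 := unitary_fix V hpsd.sqrt hVu1 hVu2 hVdet hpsd.posSemidef_sqrt hP0 hVP
      have hWU : W = U := by
        have : U * V = U := by rw [hVone, Matrix.mul_one]
        calc W = (U * Uᴴ) * W := by rw [hU1, Matrix.one_mul]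
          _ = U * V := by rw [Matrix.mul_assoc, hV]
          _ = U := this
      calc g * B * hᴴ = g * (U * hS.sqrt) * hᴴ := by rw [← hpolar]
        _ = (g * U * hᴴ) * (h * hS.sqrt * hᴴ) := (sandwich_assoc g U h hS.sqrt hh2).symm
        _ = U * hS.sqrt := by rw [← hW, hWU, hQh]
        _ = B := hpolar.symm
  · -- SU(2) case
    intro hBU
    have hB2 : Bᴴ * B = 1 := by
      have := Matrix.mem_unitaryGroup_iff'.mp hBU
      rwa [Matrix.star_eq_conjTranspose] at this
    have hlam : lam = 1 := by
      obtain ⟨i, hi⟩ := hex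
      have hv := hS.1.mulVec_eigenvectorBasis i
      nth_rewrite 1 [hB2] at hv
      rw [Matrix.one_mulVec, hi] at hv
      have hvne : ⇑(hS.1.eigenvectorBasis i) ≠ 0 := by
        intro h0
        exact (hS.1.eigenvectorBasis).orthonormal.ne_zero i (by simpa using h0)
      have hsub : (1 - lam) • ⇑(hS.1.eigenvectorBasis i) = 0 := by
        rw [sub_smul, one_smul, ← hv, sub_self]
      rcases smul_eq_zero.mp hsub with hcase | hcase
      · linarith [sub_eq_zero.mp hcase]
      · exact absurd hcase hvne
    have hM0 : Bᴴ * B - (lam : ℂ) • 1 = 0 := by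
      rw [hB2, hlam]; simp
    have hP0 : hpsd.sqrt = 0 := by
      have h2 : hpsd.sqrtᴴ * hpsd.sqrt = 0 := by
        rw [hpsd.posSemidef_sqrt.1.eq, hPP, hM0]
      exact Matrix.conjTranspose_mul_self_eq_zero.mp h2
    rw [hP0, Matrix.mul_zero]
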